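/- For every n ∈ ℕ, every A : Fin n → Fin n → ℂ, every κ ∈ ℂ, all a, b ∈ W and every s ∈ V: (a ⋆ b) ⊛_κ s = a ⊛_κ (b ⊛_κ s). Hence the level-κ fibrewise Bargmann–Fock action makes V a module over the algebra (W, ⋆). (This is equation (4.7) of the paper, the fibrewise statement underlying Proposition 4.5.) -/

import Mathlib

open MvPolynomial

noncomputable section

/-- The fibre of the Weyl bundle: polynomials in the variables `u_i = X (Sum.inl i)` and
`ǔ_j = X (Sum.inr j)` over `R = ℂ[ħ]`. -/
abbrev Wn (n : ℕ) : Type := MvPolynomial (Fin n ⊕ Fin n) (Polynomial ℂ)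

/-- The fibre of geometric quantization: polynomials in the `u` variables over `ℂ`. -/
abbrev Vn (n : ℕ) : Type := MvPolynomial (Fin n) ℂ

/-- Iterated formal partial derivative along a list of variables. -/
def pdList {σ : Type} [DecidableEq σ] (l : List σ) (a : MvPolynomial σ (Polynomial ℂ)) :
    MvPolynomial σ (Polynomial ℂ) :=
  l.foldr (fun i b => MvPolynomial.pderiv i b) a

/-- The star product with separation of variables on `Wn n`, with constant structure
coefficients `ω^{ǰi} = A j i`. -/
def starSV (n : ℕ) (A : Fin n → Fin n → ℂ) (a b : Wn n) : Wn n :=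
  ∑ r ∈ Finset.range (a.totalDegree + 1),
    MvPolynomial.C (Polynomial.C ((r.factorial : ℂ)⁻¹) * Polynomial.X ^ r) *
      ∑ I : Fin r → Fin n, ∑ J : Fin r → Fin n,
        MvPolynomial.C (Polynomial.C (∏ t, A (J t) (I t))) *
          pdList (List.ofFn fun t => (Sum.inr (J t) : Fin n ⊕ Fin n)) a *
          pdList (List.ofFn fun t => (Sum.inl (I t) : Fin n ⊕ Fin n)) b

/-- The first-order operator `D_j = Σ_i A j i ∂_{u_i}` on `Vn n`. -/
def Dop (n : ℕ) (A : Fin n → Fin n → ℂ) (j : Fin n) : Vn n →ₗ[ℂ] Vn n :=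
  ∑ i, A j i • (MvPolynomial.pderiv i).toLinearMap

/-- The (commuting) composite `D^δ = ∏_j D_j^{δ j}`. -/
def Dpow (n : ℕ) (A : Fin n → Fin n → ℂ) (δ : Fin n → ℕ) : Vn n →ₗ[ℂ] Vn n :=
  (List.ofFn fun j => (Dop n A j) ^ (δ j)).prod

/-- The level-`κ` fibrewise Bargmann–Fock action of `Wn n` on `Vn n`:
on a monomial `ħ^l u^γ ǔ^δ` it acts by `s ↦ κ^{l+|δ|} u^γ D^δ s`. -/
def bfAct (n : ℕ) (A : Fin n → Fin n → ℂ) (κ : ℂ) (a : Wn n) (s : Vn n) : Vn n :=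
  ∑ d ∈ a.support,
    Polynomial.sum (MvPolynomial.coeff d a) (fun l c =>
      (c * κ ^ (l + ∑ j, d (Sum.inr j))) •
        ((∏ i, (MvPolynomial.X i : Vn n) ^ d (Sum.inl i)) *
          Dpow n A (fun j => d (Sum.inr j)) s))

section pd
variable {σ : Type} [DecidableEq σ]

lemma pderiv_pderiv' {R : Type*} [CommRing R] (x y : σ) (a : MvPolynomial σ R) :
    pderiv x (pderiv y a) = pderiv y (pderiv x a) := by
  induction a using MvPolynomial.induction_on with
  | C c => simp [pderiv_C]
  | add p q hp hq => simp [map_add, hp, hq]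
  | mul_X p v ih =>
      simp only [pderiv_mul, map_add, pderiv_X, Pi.single_apply, ih]
      split_ifs <;> simp [pderiv_one, pderiv_C] <;> ring

@[simp] lemma pdList_nil (a : MvPolynomial σ (Polynomial ℂ)) : pdList [] a = a := rfl

@[simp] lemma pdList_cons (x : σ) (l : List σ) (a : MvPolynomial σ (Polynomial ℂ)) :
    pdList (x :: l) a = pderiv x (pdList l a) := rfl

lemma pdList_add (l : List σ) (a b : MvPolynomial σ (Polynomial ℂ)) :
    pdList l (a + b) = pdList l a + pdList l b := by
  induction l with
  | nil => rfl
  | cons x l ih => simp [ih]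

@[simp] lemma pdList_zero (l : List σ) : pdList l (0 : MvPolynomial σ (Polynomial ℂ)) = 0 := by
  induction l with
  | nil => rfl
  | cons x l ih => simp [ih]

lemma pdList_sum {α : Type*} (l : List σ) (S : Finset α) (f : α → MvPolynomial σ (Polynomial ℂ)) :
    pdList l (∑ x ∈ S, f x) = ∑ x ∈ S, pdList l (f x) := by
  classical
  induction S using Finset.induction_on with
  | empty => simp
  | insert x S h ih => rw [Finset.sum_insert h, Finset.sum_insert h, pdList_add, ih]

lemma pdList_pderiv (l : List σ) (x : σ) (a : MvPolynomial σ (Polynomial ℂ)) :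
    pdList l (pderiv x a) = pderiv x (pdList l a) := by
  induction l with
  | nil => rfl
  | cons y l ih => simp [ih, pderiv_pderiv']

lemma pdList_monomial (l : List σ) (d : σ →₀ ℕ) (q : Polynomial ℂ) :
    pdList l (monomial d q) = 0 ∨
      ∃ d' : σ →₀ ℕ, (d'.sum fun _ e => e) + l.length = (d.sum fun _ e => e) ∧
        ∃ c : Polynomial ℂ, pdList l (monomial d q) = monomial d' c := by
  induction l with
  | nil => exact Or.inr ⟨d, by simp, q, rfl⟩
  | cons x l ih =>
      rcases ih with h | ⟨d', hd', c, hc⟩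
      · left; simp [h]
      · rw [pdList_cons, hc, pderiv_monomial]
        by_cases hx : d' x = 0
        · left; simp [hx]
        · right
          refine ⟨d' - Finsupp.single x 1, ?_, _, rfl⟩
          have hrep : d' = (d' - Finsupp.single x 1) + Finsupp.single x 1 := by
            ext y
            by_cases hxy : y = x
            · subst hxy
              simp [Finsupp.single_apply, Nat.sub_add_cancel (Nat.one_le_iff_ne_zero.2 hx)]
            · simp [Finsupp.single_apply, Ne.symm hxy, hxy]
          have : (d'.sum fun _ e => e) = ((d' - Finsupp.single x 1).sum fun _ e => e) + 1 := by
            conv_lhs => rw [hrep]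
            rw [Finsupp.sum_add_index (by simp) (by simp)]
            simp
          simp only [List.length_cons]
          omega

lemma pdList_eq_zero_of_totalDegree_lt (l : List σ) (a : MvPolynomial σ (Polynomial ℂ))
    (h : a.totalDegree < l.length) : pdList l a = 0 := by
  conv_lhs => rw [← support_sum_monomial_coeff a]
  rw [pdList_sum]
  refine Finset.sum_eq_zero fun d hd => ?_
  rcases pdList_monomial l d (coeff d a) with h0 | ⟨d', hd', c, hc⟩
  · exact h0
  · exfalso
    have := MvPolynomial.le_totalDegree hd
    omega

end pd

section Aux

variable {n : ℕ} (A : Fin n → Fin n → ℂ)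

def Bsum (r : ℕ) (a b : Wn n) : Wn n :=
  ∑ I : Fin r → Fin n, ∑ J : Fin r → Fin n,
    MvPolynomial.C (Polynomial.C (∏ t, A (J t) (I t))) *
      pdList (List.ofFn fun t => (Sum.inr (J t) : Fin n ⊕ Fin n)) a *
      pdList (List.ofFn fun t => (Sum.inl (I t) : Fin n ⊕ Fin n)) b

lemma Bsum_zero (a b : Wn n) : Bsum A 0 a b = a * b := by
  simp [Bsum, pdList]

lemma sum_fn_succ {M : Type*} [AddCommMonoid M] (r : ℕ) (f : (Fin (r+1) → Fin n) → M) :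
    ∑ I : Fin (r+1) → Fin n, f I = ∑ i : Fin n, ∑ I : Fin r → Fin n, f (Fin.cons i I) := by
  rw [← (Fin.consEquiv (fun _ : Fin (r+1) => Fin n)).sum_comp f]
  rw [Fintype.sum_prod_type]
  rfl

lemma Bsum_succ (r : ℕ) (a b : Wn n) :
    Bsum A (r+1) a b =
      ∑ j, ∑ i, MvPolynomial.C (Polynomial.C (A j i)) *
        Bsum A r (pderiv (Sum.inr j) a) (pderiv (Sum.inl i) b) := by
  have key : ∀ (i j : Fin n) (I J : Fin r → Fin n),
      MvPolynomial.C (Polynomial.C (∏ t : Fin (r+1), A ((Fin.cons j J : Fin (r+1) → Fin n) t) ((Fin.cons i I : Fin (r+1) → Fin n) t))) *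
        pdList (List.ofFn fun t => (Sum.inr ((Fin.cons j J : Fin (r+1) → Fin n) t) : Fin n ⊕ Fin n)) a *
        pdList (List.ofFn fun t => (Sum.inl ((Fin.cons i I : Fin (r+1) → Fin n) t) : Fin n ⊕ Fin n)) b
      = MvPolynomial.C (Polynomial.C (A j i)) *
          (MvPolynomial.C (Polynomial.C (∏ t, A (J t) (I t))) *
           pdList (List.ofFn fun t => (Sum.inr (J t) : Fin n ⊕ Fin n)) (pderiv (Sum.inr j) a) *
           pdList (List.ofFn fun t => (Sum.inl (I t) : Fin n ⊕ Fin n)) (pderiv (Sum.inl i) b)) := by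
    intro i j I J
    rw [Fin.prod_univ_succ]
    simp only [Fin.cons_zero, Fin.cons_succ, List.ofFn_succ, pdList_cons, pdList_pderiv,
      Polynomial.C_mul, map_mul]
    ring
  unfold Bsum
  simp only [sum_fn_succ]
  calc (∑ i : Fin n, ∑ I : Fin r → Fin n, ∑ j : Fin n, ∑ J : Fin r → Fin n,
          MvPolynomial.C (Polynomial.C (∏ t, A ((Fin.cons j J : Fin (r+1) → Fin n) t) ((Fin.cons i I : Fin (r+1) → Fin n) t))) *
            pdList (List.ofFn fun t => (Sum.inr ((Fin.cons j J : Fin (r+1) → Fin n) t) : Fin n ⊕ Fin n)) a *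
            pdList (List.ofFn fun t => (Sum.inl ((Fin.cons i I : Fin (r+1) → Fin n) t) : Fin n ⊕ Fin n)) b)
      = ∑ i : Fin n, ∑ I : Fin r → Fin n, ∑ j : Fin n, ∑ J : Fin r → Fin n,
          MvPolynomial.C (Polynomial.C (A j i)) *
            (MvPolynomial.C (Polynomial.C (∏ t, A (J t) (I t))) *
             pdList (List.ofFn fun t => (Sum.inr (J t) : Fin n ⊕ Fin n)) (pderiv (Sum.inr j) a) *
             pdList (List.ofFn fun t => (Sum.inl (I t) : Fin n ⊕ Fin n)) (pderiv (Sum.inl i) b)) := by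
        exact Finset.sum_congr rfl fun i _ => Finset.sum_congr rfl fun I _ =>
          Finset.sum_congr rfl fun j _ => Finset.sum_congr rfl fun J _ => key i j I J
    _ = ∑ j : Fin n, ∑ i : Fin n, MvPolynomial.C (Polynomial.C (A j i)) *
          ∑ I : Fin r → Fin n, ∑ J : Fin r → Fin n,
            MvPolynomial.C (Polynomial.C (∏ t, A (J t) (I t))) *
              pdList (List.ofFn fun t => (Sum.inr (J t) : Fin n ⊕ Fin n)) (pderiv (Sum.inr j) a) *
              pdList (List.ofFn fun t => (Sum.inl (I t) : Fin n ⊕ Fin n)) (pderiv (Sum.inl i) b) := by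
        simp only [Finset.mul_sum]
        exact Eq.trans (Finset.sum_congr rfl fun i _ => Finset.sum_comm) Finset.sum_comm
    _ = _ := rfl


lemma Bsum_add_left (r : ℕ) (a₁ a₂ b : Wn n) :
    Bsum A r (a₁ + a₂) b = Bsum A r a₁ b + Bsum A r a₂ b := by
  simp [Bsum, pdList_add, add_mul, mul_add, Finset.sum_add_distrib]

lemma Bsum_zero_left (r : ℕ) (b : Wn n) : Bsum A r 0 b = 0 := by
  simp [Bsum, pdList_zero]

lemma pdList_mul_X_inl (l : List (Fin n ⊕ Fin n)) (h : ∀ x ∈ l, ∃ j, x = Sum.inr j)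
    (i : Fin n) (a : Wn n) :
    pdList l (X (Sum.inl i) * a) = X (Sum.inl i) * pdList l a := by
  induction l with
  | nil => rfl
  | cons x l ih =>
      obtain ⟨j, rfl⟩ := h x List.mem_cons_self
      rw [pdList_cons, pdList_cons, ih (fun y hy => h y (List.mem_cons_of_mem _ hy)),
        pderiv_mul, pderiv_X_of_ne (by simp), zero_mul, zero_add]

lemma Bsum_inl (r : ℕ) (i : Fin n) (a b : Wn n) :
    Bsum A r (X (Sum.inl i) * a) b = X (Sum.inl i) * Bsum A r a b := by
  unfold Bsum
  simp only [Finset.mul_sum]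
  refine Finset.sum_congr rfl fun I _ => Finset.sum_congr rfl fun J _ => ?_
  rw [pdList_mul_X_inl _ (by simp only [List.mem_ofFn]; rintro x ⟨t, rfl⟩; exact ⟨J t, rfl⟩)]
  ring

lemma pderiv_inr_mul (j j' : Fin n) (a : Wn n) :
    pderiv (Sum.inr j') (X (Sum.inr j) * a) =
      X (Sum.inr j) * pderiv (Sum.inr j') a + if j' = j then a else 0 := by
  rw [pderiv_mul]
  by_cases h : j' = j
  · subst h; simp [add_comm]
  · have hne : (Sum.inr j : Fin n ⊕ Fin n) ≠ Sum.inr j' := by simp [Ne.symm h]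
    simp [pderiv_X_of_ne hne, h]

lemma sum_comm3 {M : Type*} [AddCommMonoid M] (f : Fin n → Fin n → Fin n → M) :
    ∑ x : Fin n, ∑ y : Fin n, ∑ z : Fin n, f x y z
      = ∑ z : Fin n, ∑ x : Fin n, ∑ y : Fin n, f x y z :=
  Eq.trans (Finset.sum_congr rfl fun _ _ => Finset.sum_comm) Finset.sum_comm

lemma Bsum_inr (j : Fin n) : ∀ (r : ℕ) (a b : Wn n),
    Bsum A (r+1) (X (Sum.inr j) * a) b =
      X (Sum.inr j) * Bsum A (r+1) a b +
        MvPolynomial.C (Polynomial.C ((r+1 : ℕ) : ℂ)) *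
          ∑ i, MvPolynomial.C (Polynomial.C (A j i)) *
            Bsum A r a (pderiv (Sum.inl i) b) := by
  intro r
  induction r with
  | zero =>
      intro a b
      rw [Bsum_succ]
      have h1 : ∀ (j' i' : Fin n),
          MvPolynomial.C (Polynomial.C (A j' i')) *
            Bsum A 0 (pderiv (Sum.inr j') (X (Sum.inr j) * a)) (pderiv (Sum.inl i') b)
          = MvPolynomial.C (Polynomial.C (A j' i')) *
              (X (Sum.inr j) * Bsum A 0 (pderiv (Sum.inr j') a) (pderiv (Sum.inl i') b))
            + (if j' = j then MvPolynomial.C (Polynomial.C (A j' i')) *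
                (a * pderiv (Sum.inl i') b) else 0) := by
        intro j' i'
        rw [pderiv_inr_mul, Bsum_zero, Bsum_zero]
        split_ifs with h
        · ring
        · ring
      calc (∑ j' : Fin n, ∑ i' : Fin n, MvPolynomial.C (Polynomial.C (A j' i')) *
              Bsum A 0 (pderiv (Sum.inr j') (X (Sum.inr j) * a)) (pderiv (Sum.inl i') b))
          = (∑ j' : Fin n, ∑ i' : Fin n, MvPolynomial.C (Polynomial.C (A j' i')) *
              (X (Sum.inr j) * Bsum A 0 (pderiv (Sum.inr j') a) (pderiv (Sum.inl i') b)))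
            + ∑ j' : Fin n, ∑ i' : Fin n, (if j' = j then MvPolynomial.C (Polynomial.C (A j' i')) *
                (a * pderiv (Sum.inl i') b) else 0) := by
            rw [← Finset.sum_add_distrib]
            refine Finset.sum_congr rfl fun j' _ => ?_
            rw [← Finset.sum_add_distrib]
            exact Finset.sum_congr rfl fun i' _ => h1 j' i'
        _ = X (Sum.inr j) * Bsum A 1 a b +
              MvPolynomial.C (Polynomial.C ((1 : ℕ) : ℂ)) *
                ∑ i, MvPolynomial.C (Polynomial.C (A j i)) *
                  Bsum A 0 a (pderiv (Sum.inl i) b) := by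
            congr 1
            · rw [Bsum_succ, Finset.mul_sum]
              refine Finset.sum_congr rfl fun j' _ => ?_
              rw [Finset.mul_sum]
              exact Finset.sum_congr rfl fun i' _ => by ring
            · rw [Nat.cast_one, map_one, map_one, one_mul]
              have : ∀ j' : Fin n, (∑ i' : Fin n, if j' = j then
                  MvPolynomial.C (Polynomial.C (A j' i')) * (a * pderiv (Sum.inl i') b) else 0)
                  = if j' = j then (∑ i' : Fin n,
                    MvPolynomial.C (Polynomial.C (A j' i')) * (a * pderiv (Sum.inl i') b)) else 0 := by
                intro j'; split_ifs <;> simp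
              rw [Finset.sum_congr rfl fun j' _ => this j']
              rw [Finset.sum_ite_eq' Finset.univ j]
              simp only [Finset.mem_univ, if_true]
              exact Finset.sum_congr rfl fun i _ => by rw [Bsum_zero]
  | succ r IH =>
      intro a b
      rw [Bsum_succ]
      have h1 : ∀ (j' i' : Fin n),
          MvPolynomial.C (Polynomial.C (A j' i')) *
            Bsum A (r+1) (pderiv (Sum.inr j') (X (Sum.inr j) * a)) (pderiv (Sum.inl i') b)
          = MvPolynomial.C (Polynomial.C (A j' i')) *
              (X (Sum.inr j) * Bsum A (r+1) (pderiv (Sum.inr j') a) (pderiv (Sum.inl i') b))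
            + MvPolynomial.C (Polynomial.C ((r+1 : ℕ) : ℂ)) *
                ∑ i, MvPolynomial.C (Polynomial.C (A j' i')) *
                  (MvPolynomial.C (Polynomial.C (A j i)) *
                    Bsum A r (pderiv (Sum.inr j') a)
                      (pderiv (Sum.inl i) (pderiv (Sum.inl i') b)))
            + (if j' = j then MvPolynomial.C (Polynomial.C (A j' i')) *
                Bsum A (r+1) a (pderiv (Sum.inl i') b) else 0) := by
        intro j' i'
        rw [pderiv_inr_mul, Bsum_add_left, IH (pderiv (Sum.inr j') a) (pderiv (Sum.inl i') b)]
        split_ifs with h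
        · simp only [Finset.mul_sum, mul_add]
          rw [add_left_inj, add_right_inj]
          exact Finset.sum_congr rfl fun i _ => by ring
        · simp only [Bsum_zero_left, add_zero, Finset.mul_sum, mul_add]
          rw [add_right_inj]
          exact Finset.sum_congr rfl fun i _ => by ring
      have aux : ∀ i : Fin n, Bsum A (r+1) a (pderiv (Sum.inl i) b)
          = ∑ j' : Fin n, ∑ i' : Fin n, MvPolynomial.C (Polynomial.C (A j' i')) *
              Bsum A r (pderiv (Sum.inr j') a) (pderiv (Sum.inl i) (pderiv (Sum.inl i') b)) := by
        intro i
        rw [Bsum_succ]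
        exact Finset.sum_congr rfl fun j' _ => Finset.sum_congr rfl fun i' _ => by
          rw [pderiv_pderiv']
      calc (∑ j' : Fin n, ∑ i' : Fin n, MvPolynomial.C (Polynomial.C (A j' i')) *
              Bsum A (r+1) (pderiv (Sum.inr j') (X (Sum.inr j) * a)) (pderiv (Sum.inl i') b))
          = (∑ j' : Fin n, ∑ i' : Fin n, MvPolynomial.C (Polynomial.C (A j' i')) *
              (X (Sum.inr j) * Bsum A (r+1) (pderiv (Sum.inr j') a) (pderiv (Sum.inl i') b)))
            + (∑ j' : Fin n, ∑ i' : Fin n, MvPolynomial.C (Polynomial.C ((r+1 : ℕ) : ℂ)) *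
                ∑ i, MvPolynomial.C (Polynomial.C (A j' i')) *
                  (MvPolynomial.C (Polynomial.C (A j i)) *
                    Bsum A r (pderiv (Sum.inr j') a)
                      (pderiv (Sum.inl i) (pderiv (Sum.inl i') b))))
            + ∑ j' : Fin n, ∑ i' : Fin n, (if j' = j then MvPolynomial.C (Polynomial.C (A j' i')) *
                Bsum A (r+1) a (pderiv (Sum.inl i') b) else 0) := by
            rw [← Finset.sum_add_distrib, ← Finset.sum_add_distrib]
            refine Finset.sum_congr rfl fun j' _ => ?_
            rw [← Finset.sum_add_distrib, ← Finset.sum_add_distrib]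
            exact Finset.sum_congr rfl fun i' _ => h1 j' i'
        _ = X (Sum.inr j) * Bsum A (r+2) a b
            + MvPolynomial.C (Polynomial.C ((r+1 : ℕ) : ℂ)) *
                ∑ i, MvPolynomial.C (Polynomial.C (A j i)) *
                  Bsum A (r+1) a (pderiv (Sum.inl i) b)
            + ∑ i, MvPolynomial.C (Polynomial.C (A j i)) *
                Bsum A (r+1) a (pderiv (Sum.inl i) b) := by
            congr 1
            · congr 1
              · rw [Bsum_succ A (r+1), Finset.mul_sum]
                refine Finset.sum_congr rfl fun j' _ => ?_
                rw [Finset.mul_sum]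
                exact Finset.sum_congr rfl fun i' _ => by ring
              · have this1 : MvPolynomial.C (Polynomial.C ((r+1:ℕ):ℂ)) *
                    ∑ i, MvPolynomial.C (Polynomial.C (A j i)) *
                      Bsum A (r+1) a (pderiv (Sum.inl i) b)
                    = ∑ i : Fin n, ∑ j' : Fin n, ∑ i' : Fin n,
                        MvPolynomial.C (Polynomial.C ((r+1:ℕ):ℂ)) *
                          (MvPolynomial.C (Polynomial.C (A j i)) *
                            (MvPolynomial.C (Polynomial.C (A j' i')) *
                              Bsum A r (pderiv (Sum.inr j') a)
                                (pderiv (Sum.inl i) (pderiv (Sum.inl i') b)))) := by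
                  rw [Finset.mul_sum]
                  refine Finset.sum_congr rfl fun i _ => ?_
                  rw [aux i]
                  simp only [Finset.mul_sum]
                refine Eq.trans (Eq.trans ?_ (sum_comm3 _)) this1.symm
                simp only [Finset.mul_sum]
                exact Finset.sum_congr rfl fun j' _ => Finset.sum_congr rfl fun i' _ =>
                  Finset.sum_congr rfl fun i _ => by ring
            · have : ∀ j' : Fin n, (∑ i' : Fin n, if j' = j then
                  MvPolynomial.C (Polynomial.C (A j' i')) *
                    Bsum A (r+1) a (pderiv (Sum.inl i') b) else 0)
                  = if j' = j then (∑ i' : Fin n,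
                    MvPolynomial.C (Polynomial.C (A j' i')) *
                      Bsum A (r+1) a (pderiv (Sum.inl i') b)) else 0 := by
                intro j'; split_ifs <;> simp
              rw [Finset.sum_congr rfl fun j' _ => this j']
              rw [Finset.sum_ite_eq' Finset.univ j]
              simp [Finset.mem_univ]
        _ = X (Sum.inr j) * Bsum A (r+1+1) a b +
              MvPolynomial.C (Polynomial.C ((r+1+1 : ℕ) : ℂ)) *
                ∑ i, MvPolynomial.C (Polynomial.C (A j i)) *
                  Bsum A (r+1) a (pderiv (Sum.inl i) b) := by
            have hc : (MvPolynomial.C (Polynomial.C ((r+1+1 : ℕ) : ℂ)) : Wn n)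
                = MvPolynomial.C (Polynomial.C ((r+1 : ℕ) : ℂ)) + 1 := by
              push_cast
              rw [map_add, map_add, map_one, map_one]
            rw [hc]
            ring


lemma Bsum_eq_zero_of_lt (r : ℕ) (a b : Wn n) (h : a.totalDegree < r) :
    Bsum A r a b = 0 := by
  unfold Bsum
  refine Finset.sum_eq_zero fun I _ => Finset.sum_eq_zero fun J _ => ?_
  rw [pdList_eq_zero_of_totalDegree_lt _ a (by simpa using h), mul_zero, zero_mul]

lemma starSV_def (a b : Wn n) :
    starSV n A a b = ∑ r ∈ Finset.range (a.totalDegree + 1),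
      MvPolynomial.C (Polynomial.C ((r.factorial : ℂ)⁻¹) * Polynomial.X ^ r) *
        Bsum A r a b := rfl

lemma starSV_eq_range (N : ℕ) (a b : Wn n) (h : a.totalDegree < N) :
    starSV n A a b = ∑ r ∈ Finset.range N,
      MvPolynomial.C (Polynomial.C ((r.factorial : ℂ)⁻¹) * Polynomial.X ^ r) *
        Bsum A r a b := by
  rw [starSV_def]
  refine Finset.sum_subset (by simp [Finset.range_subset]; omega) fun r _ hr => ?_
  rw [Bsum_eq_zero_of_lt A r a b (by simp at hr; omega), mul_zero]

lemma starSV_C (c : Polynomial ℂ) (b : Wn n) :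
    starSV n A (MvPolynomial.C c) b = MvPolynomial.C c * b := by
  rw [starSV_def, totalDegree_C]
  rw [Finset.sum_range_one]
  rw [Bsum_zero]
  simp

lemma starSV_add_left (a₁ a₂ b : Wn n) :
    starSV n A (a₁ + a₂) b = starSV n A a₁ b + starSV n A a₂ b := by
  set N := max (a₁ + a₂).totalDegree (max a₁.totalDegree a₂.totalDegree) + 1 with hN
  rw [starSV_eq_range A N _ b (by omega), starSV_eq_range A N a₁ b (by omega),
    starSV_eq_range A N a₂ b (by omega), ← Finset.sum_add_distrib]
  exact Finset.sum_congr rfl fun r _ => by rw [Bsum_add_left, mul_add]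

lemma starSV_mul_X_inl (i : Fin n) (a b : Wn n) :
    starSV n A (a * X (Sum.inl i)) b = X (Sum.inl i) * starSV n A a b := by
  have hd : (a * X (Sum.inl i)).totalDegree < a.totalDegree + 2 := by
    have := totalDegree_mul a (X (Sum.inl i) : Wn n)
    rw [totalDegree_X] at this
    omega
  rw [starSV_eq_range A (a.totalDegree + 2) _ b hd,
    starSV_eq_range A (a.totalDegree + 2) a b (by omega), Finset.mul_sum]
  refine Finset.sum_congr rfl fun r _ => ?_
  rw [mul_comm a (X (Sum.inl i)), Bsum_inl]
  ring

lemma starSV_mul_X_inr (j : Fin n) (a b : Wn n) :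
    starSV n A (a * X (Sum.inr j)) b =
      X (Sum.inr j) * starSV n A a b +
        MvPolynomial.C Polynomial.X * ∑ i, MvPolynomial.C (Polynomial.C (A j i)) *
          starSV n A a (pderiv (Sum.inl i) b) := by
  have hd : (a * X (Sum.inr j)).totalDegree < a.totalDegree + 1 + 1 := by
    have := totalDegree_mul a (X (Sum.inr j) : Wn n)
    rw [totalDegree_X] at this
    omega
  rw [starSV_eq_range A (a.totalDegree + 1 + 1) _ b hd, mul_comm a (X (Sum.inr j))]
  rw [Finset.sum_range_succ']
  have step : ∀ r : ℕ,
      MvPolynomial.C (Polynomial.C (((r+1).factorial : ℂ)⁻¹) * Polynomial.X ^ (r+1)) *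
        Bsum A (r+1) (X (Sum.inr j) * a) b
      = MvPolynomial.C (Polynomial.C (((r+1).factorial : ℂ)⁻¹) * Polynomial.X ^ (r+1)) *
          (X (Sum.inr j) * Bsum A (r+1) a b)
        + MvPolynomial.C Polynomial.X *
            (MvPolynomial.C (Polynomial.C ((r.factorial : ℂ)⁻¹) * Polynomial.X ^ r) *
              ∑ i, MvPolynomial.C (Polynomial.C (A j i)) * Bsum A r a (pderiv (Sum.inl i) b)) := by
    intro r
    rw [Bsum_inr, mul_add]
    rw [add_right_inj]
    have hfac : ((r+1).factorial : ℂ)⁻¹ * ((r+1 : ℕ) : ℂ) = (r.factorial : ℂ)⁻¹ := by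
      have h1 : ((r+1 : ℕ) : ℂ) ≠ 0 := Nat.cast_ne_zero.2 (Nat.succ_ne_zero r)
      rw [Nat.factorial_succ, Nat.cast_mul, mul_inv,
        mul_comm (((r+1 : ℕ) : ℂ))⁻¹ _, mul_assoc, inv_mul_cancel₀ h1, mul_one]
    calc MvPolynomial.C (Polynomial.C (((r+1).factorial : ℂ)⁻¹) * Polynomial.X ^ (r+1)) *
          (MvPolynomial.C (Polynomial.C ((r+1 : ℕ) : ℂ)) *
            ∑ i, MvPolynomial.C (Polynomial.C (A j i)) * Bsum A r a (pderiv (Sum.inl i) b))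
        = MvPolynomial.C (Polynomial.C (((r+1).factorial : ℂ)⁻¹ * ((r+1:ℕ) : ℂ)) *
              (Polynomial.X ^ (r+1))) *
            ∑ i, MvPolynomial.C (Polynomial.C (A j i)) * Bsum A r a (pderiv (Sum.inl i) b) := by
          rw [map_mul, map_mul, map_mul, map_mul]
          ring
      _ = _ := by
          rw [hfac, pow_succ]
          simp only [map_mul]
          ring
  refine Eq.trans (congrArg (· + MvPolynomial.C (Polynomial.C (((0:ℕ).factorial : ℂ)⁻¹) *
      Polynomial.X ^ 0) * Bsum A 0 (X (Sum.inr j) * a) b)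
    (Finset.sum_congr rfl fun r _ => step r)) ?_
  rw [Finset.sum_add_distrib]
  have part1 : (∑ r ∈ Finset.range (a.totalDegree + 1),
        MvPolynomial.C (Polynomial.C (((r+1).factorial : ℂ)⁻¹) * Polynomial.X ^ (r+1)) *
          (X (Sum.inr j) * Bsum A (r+1) a b))
      + MvPolynomial.C (Polynomial.C (((0:ℕ).factorial : ℂ)⁻¹) * Polynomial.X ^ 0) *
          Bsum A 0 (X (Sum.inr j) * a) b
      = X (Sum.inr j) * starSV n A a b := by
    conv_rhs => rw [starSV_eq_range A (a.totalDegree + 1 + 1) a b (by omega), Finset.mul_sum,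
      Finset.sum_range_succ']
    refine congrArg₂ (· + ·) ?_ ?_
    · exact Finset.sum_congr rfl fun r _ => by ring
    · rw [Bsum_zero, Bsum_zero]
      ring
  have part2 : (∑ r ∈ Finset.range (a.totalDegree + 1),
        MvPolynomial.C Polynomial.X *
          (MvPolynomial.C (Polynomial.C ((r.factorial : ℂ)⁻¹) * Polynomial.X ^ r) *
            ∑ i, MvPolynomial.C (Polynomial.C (A j i)) * Bsum A r a (pderiv (Sum.inl i) b)))
      = MvPolynomial.C Polynomial.X * ∑ i, MvPolynomial.C (Polynomial.C (A j i)) *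
          starSV n A a (pderiv (Sum.inl i) b) := by
    rw [Finset.mul_sum]
    have hR : ∀ i : Fin n, MvPolynomial.C Polynomial.X *
        (MvPolynomial.C (Polynomial.C (A j i)) * starSV n A a (pderiv (Sum.inl i) b))
        = ∑ r ∈ Finset.range (a.totalDegree + 1),
            MvPolynomial.C Polynomial.X * (MvPolynomial.C (Polynomial.C (A j i)) *
              (MvPolynomial.C (Polynomial.C ((r.factorial : ℂ)⁻¹) * Polynomial.X ^ r) *
                Bsum A r a (pderiv (Sum.inl i) b))) := by
      intro i
      rw [starSV_def, Finset.mul_sum, Finset.mul_sum]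
    refine Eq.trans ?_ (Finset.sum_congr rfl fun i _ => hR i).symm
    refine Eq.trans ?_ Finset.sum_comm
    refine Finset.sum_congr rfl fun r _ => ?_
    rw [Finset.mul_sum, Finset.mul_sum]
    exact Finset.sum_congr rfl fun i _ => by ring
  calc _ = ((∑ r ∈ Finset.range (a.totalDegree + 1),
        MvPolynomial.C (Polynomial.C (((r+1).factorial : ℂ)⁻¹) * Polynomial.X ^ (r+1)) *
          (X (Sum.inr j) * Bsum A (r+1) a b))
      + MvPolynomial.C (Polynomial.C (((0:ℕ).factorial : ℂ)⁻¹) * Polynomial.X ^ 0) *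
          Bsum A 0 (X (Sum.inr j) * a) b)
      + (∑ r ∈ Finset.range (a.totalDegree + 1),
        MvPolynomial.C Polynomial.X *
          (MvPolynomial.C (Polynomial.C ((r.factorial : ℂ)⁻¹) * Polynomial.X ^ r) *
            ∑ i, MvPolynomial.C (Polynomial.C (A j i)) * Bsum A r a (pderiv (Sum.inl i) b))) := by
        ring
    _ = _ := by rw [part1, part2]

variable (κ : ℂ)

/-! ### Commuting operators -/

lemma commute_Dop (j k : Fin n) : Commute (Dop n A j) (Dop n A k) := by
  unfold Dop
  refine Commute.sum_left _ _ _ fun i _ => Commute.sum_right _ _ _ fun i' _ => ?_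
  refine Commute.smul_left (Commute.smul_right ?_ _) _
  exact LinearMap.ext fun p => pderiv_pderiv' i i' p

lemma commute_Dop_Dpow (j : Fin n) (δ : Fin n → ℕ) :
    Commute (Dop n A j) (Dpow n A δ) := by
  refine Commute.list_prod_right _ _ fun x hx => ?_
  rw [List.mem_ofFn] at hx
  obtain ⟨k, rfl⟩ := hx
  exact (commute_Dop A j k).pow_right _

lemma listProd_pow_succ {M : Type*} [Monoid M] :
    ∀ (m : ℕ) (f : Fin m → M), (∀ x y, Commute (f x) (f y)) →
      ∀ (δ : Fin m → ℕ) (j : Fin m),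
        (List.ofFn fun k => f k ^ (δ k + if k = j then 1 else 0)).prod
          = (List.ofFn fun k => f k ^ δ k).prod * f j := by
  intro m
  induction m with
  | zero => intro f _ δ j; exact j.elim0
  | succ m IH =>
      intro f hc δ j
      rw [List.ofFn_succ, List.ofFn_succ, List.prod_cons, List.prod_cons]
      have htail : ∀ (g : Fin (m+1) → ℕ),
          Commute (f 0) (List.ofFn fun k : Fin m => f k.succ ^ g k.succ).prod := by
        intro g
        refine Commute.list_prod_right _ _ fun x hx => ?_
        rw [List.mem_ofFn] at hx
        obtain ⟨k, rfl⟩ := hx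
        exact (hc 0 k.succ).pow_right _
      cases j using Fin.cases with
      | zero =>
          simp only [Fin.succ_ne_zero, eq_self_iff_true, if_true, if_false, ite_true, ite_false, add_zero]
          rw [pow_succ, mul_assoc, mul_assoc]
          congr 1
          exact (htail δ).eq
      | succ j' =>
          have h0 : (0 : Fin (m+1)) ≠ j'.succ := (Fin.succ_ne_zero j').symm
          rw [if_neg h0, add_zero]
          have : (fun k : Fin m => f k.succ ^ (δ k.succ + if k.succ = j'.succ then 1 else 0))
              = fun k : Fin m => f k.succ ^ (δ k.succ + if k = j' then 1 else 0) := by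
            funext k
            simp [Fin.succ_inj]
          rw [this, IH (fun k => f k.succ) (fun x y => hc x.succ y.succ) (fun k => δ k.succ) j']
          rw [← mul_assoc]

lemma Dpow_succ_at (δ : Fin n → ℕ) (j : Fin n) :
    Dpow n A (fun k => δ k + if k = j then 1 else 0) = Dpow n A δ * Dop n A j :=
  listProd_pow_succ n (Dop n A) (fun x y => commute_Dop A x y) δ j

lemma Dpow_zero' : Dpow n A (fun _ => 0) = 1 := by
  unfold Dpow
  refine List.prod_eq_one fun x hx => ?_
  rw [List.mem_ofFn] at hx
  obtain ⟨k, rfl⟩ := hx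
  exact pow_zero _

/-! ### basic bfAct lemmas -/

lemma bfAct_eq_sum_subset (a : Wn n) (s : Vn n) (S : Finset ((Fin n ⊕ Fin n) →₀ ℕ))
    (hS : a.support ⊆ S) :
    bfAct n A κ a s = ∑ d ∈ S,
      Polynomial.sum (MvPolynomial.coeff d a) (fun l c =>
        (c * κ ^ (l + ∑ j, d (Sum.inr j))) •
          ((∏ i, (MvPolynomial.X i : Vn n) ^ d (Sum.inl i)) *
            Dpow n A (fun j => d (Sum.inr j)) s)) := by
  refine Finset.sum_subset hS fun d _ hd => ?_
  rw [MvPolynomial.notMem_support_iff.1 hd, Polynomial.sum_zero_index]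

lemma bfAct_zero (s : Vn n) : bfAct n A κ 0 s = 0 := by
  unfold bfAct
  simp

lemma bfAct_add (a₁ a₂ : Wn n) (s : Vn n) :
    bfAct n A κ (a₁ + a₂) s = bfAct n A κ a₁ s + bfAct n A κ a₂ s := by
  set S := (a₁ + a₂).support ∪ (a₁.support ∪ a₂.support) with hS
  rw [bfAct_eq_sum_subset A κ _ s S Finset.subset_union_left,
    bfAct_eq_sum_subset A κ a₁ s S
      (fun d hd => Finset.mem_union_right _ (Finset.mem_union_left _ hd)),
    bfAct_eq_sum_subset A κ a₂ s S
      (fun d hd => Finset.mem_union_right _ (Finset.mem_union_right _ hd)),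
    ← Finset.sum_add_distrib]
  refine Finset.sum_congr rfl fun d _ => ?_
  rw [MvPolynomial.coeff_add]
  rw [Polynomial.sum_add_index _ _ _ (fun i => by simp) (fun i b₁ b₂ => by rw [add_mul, add_smul])]

lemma bfAct_sum {α : Type*} (S : Finset α) (f : α → Wn n) (s : Vn n) :
    bfAct n A κ (∑ x ∈ S, f x) s = ∑ x ∈ S, bfAct n A κ (f x) s := by
  classical
  induction S using Finset.induction_on with
  | empty => simp [bfAct_zero]
  | insert x S h ih => rw [Finset.sum_insert h, Finset.sum_insert h, bfAct_add, ih]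

lemma bfAct_monomial (d : (Fin n ⊕ Fin n) →₀ ℕ) (q : Polynomial ℂ) (s : Vn n) :
    bfAct n A κ (monomial d q) s = Polynomial.sum q (fun l c =>
      (c * κ ^ (l + ∑ j, d (Sum.inr j))) •
        ((∏ i, (MvPolynomial.X i : Vn n) ^ d (Sum.inl i)) *
          Dpow n A (fun j => d (Sum.inr j)) s)) := by
  rw [bfAct_eq_sum_subset A κ _ s {d} MvPolynomial.support_monomial_subset,
    Finset.sum_singleton, MvPolynomial.coeff_monomial, if_pos rfl]

lemma Wn_add_induction {M : Wn n → Prop} (h0 : M 0) (hadd : ∀ a b, M a → M b → M (a + b))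
    (hmono : ∀ d l c, M (monomial d (Polynomial.monomial l c))) : ∀ a : Wn n, M a := by
  intro a
  rw [← support_sum_monomial_coeff a]
  refine Finset.sum_induction _ M hadd h0 fun d _ => ?_
  have : (monomial d (coeff d a) : Wn n)
      = ∑ m ∈ (coeff d a).support, monomial d (Polynomial.monomial m ((coeff d a).coeff m)) := by
    rw [← map_sum (monomial d), ← Polynomial.as_sum_support (coeff d a)]
  rw [this]
  exact Finset.sum_induction _ M hadd h0 fun m _ => hmono d m _

lemma bfAct_one (s : Vn n) : bfAct n A κ 1 s = s := by
  have h1 : (1 : Wn n) = monomial 0 (Polynomial.monomial 0 1) := by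
    simp [Polynomial.monomial_zero_one]
  rw [h1, bfAct_monomial, Polynomial.sum_monomial_index _ _ (by simp)]
  have hD : Dpow n A (fun j => (0 : (Fin n ⊕ Fin n) →₀ ℕ) (Sum.inr j)) = 1 := by
    rw [show (fun j => (0 : (Fin n ⊕ Fin n) →₀ ℕ) (Sum.inr j)) = fun _ : Fin n => 0 from rfl]
    exact Dpow_zero' A
  rw [hD]
  simp

/-! ### linearity in s -/

lemma bfAct_s_add (a : Wn n) (s t : Vn n) :
    bfAct n A κ a (s + t) = bfAct n A κ a s + bfAct n A κ a t := by
  unfold bfAct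
  rw [← Finset.sum_add_distrib]
  refine Finset.sum_congr rfl fun d _ => ?_
  rw [Polynomial.sum_def, Polynomial.sum_def, Polynomial.sum_def, ← Finset.sum_add_distrib]
  refine Finset.sum_congr rfl fun l _ => ?_
  rw [map_add, mul_add, smul_add]

lemma bfAct_s_smul (a : Wn n) (c : ℂ) (s : Vn n) :
    bfAct n A κ a (c • s) = c • bfAct n A κ a s := by
  unfold bfAct
  rw [Finset.smul_sum]
  refine Finset.sum_congr rfl fun d _ => ?_
  rw [Polynomial.sum_def, Polynomial.sum_def, Finset.smul_sum]
  refine Finset.sum_congr rfl fun l _ => ?_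
  rw [map_smul, mul_smul_comm, smul_comm]

lemma bfAct_s_sum {α : Type*} (a : Wn n) (S : Finset α) (f : α → Vn n) :
    bfAct n A κ a (∑ x ∈ S, f x) = ∑ x ∈ S, bfAct n A κ a (f x) := by
  classical
  induction S using Finset.induction_on with
  | empty => simpa using bfAct_s_smul A κ a 0 0
  | insert x S h ih => rw [Finset.sum_insert h, Finset.sum_insert h, bfAct_s_add, ih]

/-! ### multiplication lemmas -/

lemma bfAct_C_monomial_mul (l : ℕ) (c : ℂ) (w : Wn n) (s : Vn n) :
    bfAct n A κ (MvPolynomial.C (Polynomial.monomial l c) * w) s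
      = (c * κ ^ l) • bfAct n A κ w s := by
  induction w using Wn_add_induction with
  | h0 => rw [mul_zero]; simp [bfAct_zero]
  | hadd a b ha hb => rw [mul_add, bfAct_add, bfAct_add, ha, hb, smul_add]
  | hmono d m c' =>
      rw [MvPolynomial.C_mul_monomial, Polynomial.monomial_mul_monomial,
        bfAct_monomial, bfAct_monomial,
        Polynomial.sum_monomial_index _ _ (by simp),
        Polynomial.sum_monomial_index _ _ (by simp), smul_smul]
      congr 1
      rw [pow_add, pow_add]
      ring

lemma bfAct_C_mul (p : Polynomial ℂ) (w : Wn n) (s : Vn n) :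
    bfAct n A κ (MvPolynomial.C p * w) s
      = p.sum (fun l c => (c * κ ^ l) • bfAct n A κ w s) := by
  induction p using Polynomial.induction_on' with
  | add p q hp hq =>
      rw [map_add, add_mul, bfAct_add, hp, hq,
        Polynomial.sum_add_index _ _ _ (fun i => by simp)
          (fun a b₁ b₂ => by rw [add_mul, add_smul])]
  | monomial m c =>
      rw [bfAct_C_monomial_mul, Polynomial.sum_monomial_index _ _ (by simp)]

lemma bfAct_C_C_mul (c : ℂ) (w : Wn n) (s : Vn n) :
    bfAct n A κ (MvPolynomial.C (Polynomial.C c) * w) s = c • bfAct n A κ w s := by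
  rw [← Polynomial.monomial_zero_left, bfAct_C_monomial_mul]
  simp

lemma bfAct_hbar_mul (w : Wn n) (s : Vn n) :
    bfAct n A κ (MvPolynomial.C Polynomial.X * w) s = κ • bfAct n A κ w s := by
  rw [show (Polynomial.X : Polynomial ℂ) = Polynomial.monomial 1 1 from
    (Polynomial.monomial_one_one_eq_X).symm, bfAct_C_monomial_mul]
  simp

lemma prod_pow_ite (i : Fin n) (g : Fin n → ℕ) :
    (∏ i', (X i' : Vn n) ^ ((if i = i' then 1 else 0) + g i'))
      = X i * ∏ i', (X i' : Vn n) ^ g i' := by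
  have : ∀ i', (X i' : Vn n) ^ ((if i = i' then 1 else 0) + g i')
      = (if i = i' then X i' else 1) * X i' ^ g i' := by
    intro i'
    rw [pow_add]
    congr 1
    split_ifs <;> simp
  rw [Finset.prod_congr rfl fun i' _ => this i', Finset.prod_mul_distrib,
    Finset.prod_ite_eq Finset.univ i (fun i' => (X i' : Vn n))]
  simp

lemma bfAct_X_inl_mul (i : Fin n) (w : Wn n) (s : Vn n) :
    bfAct n A κ (X (Sum.inl i) * w) s = X i * bfAct n A κ w s := by
  induction w using Wn_add_induction with
  | h0 => rw [mul_zero]; simp [bfAct_zero]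
  | hadd a b ha hb => rw [mul_add, bfAct_add, bfAct_add, ha, hb, mul_add]
  | hmono d l c =>
      rw [show (X (Sum.inl i) : Wn n) = monomial (Finsupp.single (Sum.inl i) 1) 1 from rfl,
        monomial_mul, one_mul, bfAct_monomial, bfAct_monomial,
        Polynomial.sum_monomial_index _ _ (by simp),
        Polynomial.sum_monomial_index _ _ (by simp)]
      have hinr : ∀ j, ((Finsupp.single (Sum.inl i) 1 + d : (Fin n ⊕ Fin n) →₀ ℕ)) (Sum.inr j) = d (Sum.inr j) := by
        intro j; simp [Finsupp.single_apply]
      have hsum : (∑ j, ((Finsupp.single (Sum.inl i) 1 + d : (Fin n ⊕ Fin n) →₀ ℕ)) (Sum.inr j)) = ∑ j, d (Sum.inr j) :=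
        Finset.sum_congr rfl fun j _ => hinr j
      have hfun : (fun j => ((Finsupp.single (Sum.inl i) 1 + d : (Fin n ⊕ Fin n) →₀ ℕ)) (Sum.inr j))
          = fun j => d (Sum.inr j) := funext hinr
      have hprod : (∏ i', (X i' : Vn n) ^ (((Finsupp.single (Sum.inl i) 1 + d : (Fin n ⊕ Fin n) →₀ ℕ)) (Sum.inl i')))
          = X i * ∏ i', (X i' : Vn n) ^ d (Sum.inl i') := by
        refine Eq.trans (Finset.prod_congr rfl fun i' _ => ?_) (prod_pow_ite i fun i' => d (Sum.inl i'))
        rw [show ((Finsupp.single (Sum.inl i) 1 + d : (Fin n ⊕ Fin n) →₀ ℕ)) (Sum.inl i')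
            = (if i = i' then 1 else 0) + d (Sum.inl i') from by simp [Finsupp.single_apply]]
      rw [hsum, hfun, hprod, mul_smul_comm, mul_assoc]

lemma bfAct_X_inr_mul (j : Fin n) (w : Wn n) (s : Vn n) :
    bfAct n A κ (X (Sum.inr j) * w) s = κ • bfAct n A κ w (Dop n A j s) := by
  induction w using Wn_add_induction with
  | h0 => rw [mul_zero]; simp [bfAct_zero]
  | hadd a b ha hb => rw [mul_add, bfAct_add, bfAct_add, ha, hb, smul_add]
  | hmono d l c =>
      rw [show (X (Sum.inr j) : Wn n) = monomial (Finsupp.single (Sum.inr j) 1) 1 from rfl,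
        monomial_mul, one_mul, bfAct_monomial, bfAct_monomial,
        Polynomial.sum_monomial_index _ _ (by simp),
        Polynomial.sum_monomial_index _ _ (by simp)]
      have hinl : ∀ i', ((Finsupp.single (Sum.inr j) 1 + d : (Fin n ⊕ Fin n) →₀ ℕ)) (Sum.inl i') = d (Sum.inl i') := by
        intro i'; simp [Finsupp.single_apply]
      have hprod : (∏ i', (X i' : Vn n) ^ (((Finsupp.single (Sum.inr j) 1 + d : (Fin n ⊕ Fin n) →₀ ℕ)) (Sum.inl i')))
          = ∏ i', (X i' : Vn n) ^ d (Sum.inl i') :=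
        Finset.prod_congr rfl fun i' _ => by rw [hinl i']
      have hsum : (∑ j', ((Finsupp.single (Sum.inr j) 1 + d : (Fin n ⊕ Fin n) →₀ ℕ)) (Sum.inr j'))
          = (∑ j', d (Sum.inr j')) + 1 := by
        have : ∀ j', ((Finsupp.single (Sum.inr j) 1 + d : (Fin n ⊕ Fin n) →₀ ℕ)) (Sum.inr j')
            = d (Sum.inr j') + (if j' = j then 1 else 0) := by
          intro j'
          simp [Finsupp.single_apply, eq_comm, add_comm]
        rw [Finset.sum_congr rfl fun j' _ => this j', Finset.sum_add_distrib]
        simp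
      have hD : Dpow n A (fun j' => ((Finsupp.single (Sum.inr j) 1 + d : (Fin n ⊕ Fin n) →₀ ℕ)) (Sum.inr j'))
          = Dpow n A (fun j' => d (Sum.inr j')) * Dop n A j := by
        rw [show (fun j' => ((Finsupp.single (Sum.inr j) 1 + d : (Fin n ⊕ Fin n) →₀ ℕ)) (Sum.inr j'))
            = fun j' => d (Sum.inr j') + (if j' = j then 1 else 0) from
          funext fun j' => by simp [Finsupp.single_apply, eq_comm, add_comm]]
        exact Dpow_succ_at A _ j
      rw [hprod, hsum, hD, Module.End.mul_apply, smul_smul]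
      congr 1
      ring

/-! ### commutation of Dop with bfAct -/

lemma uprod_eq (g : Fin n → ℕ) :
    (∏ i, (X i : Vn n) ^ g i) = monomial (Finsupp.equivFunOnFinite.symm g) 1 := by
  rw [← prod_X_pow_eq_monomial]
  symm
  refine Finset.prod_subset (Finset.subset_univ _) fun i _ hi => ?_
  have h0 : g i = 0 := Finsupp.notMem_support_iff.1 hi
  show (X i : Vn n) ^ g i = 1
  rw [h0, pow_zero]

lemma pderiv_uprod (d : (Fin n ⊕ Fin n) →₀ ℕ) (i : Fin n) :
    pderiv i (∏ i', (X i' : Vn n) ^ d (Sum.inl i'))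
      = ((d (Sum.inl i) : ℂ)) •
          ∏ i', (X i' : Vn n) ^ ((d - Finsupp.single (Sum.inl i) 1 : (Fin n ⊕ Fin n) →₀ ℕ) (Sum.inl i')) := by
  rw [uprod_eq, uprod_eq, pderiv_monomial]
  have hm : Finsupp.equivFunOnFinite.symm (fun i' => d (Sum.inl i')) - Finsupp.single i 1
      = Finsupp.equivFunOnFinite.symm
          (fun i' => (d - Finsupp.single (Sum.inl i) 1 : (Fin n ⊕ Fin n) →₀ ℕ) (Sum.inl i')) := by
    ext i'
    rw [Finsupp.tsub_apply]
    rw [show (Finsupp.equivFunOnFinite.symm (fun i' => d (Sum.inl i'))) i' = d (Sum.inl i') from rfl]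
    rw [show (Finsupp.equivFunOnFinite.symm
        (fun i' => (d - Finsupp.single (Sum.inl i) 1 : (Fin n ⊕ Fin n) →₀ ℕ) (Sum.inl i'))) i'
      = (d - Finsupp.single (Sum.inl i) 1 : (Fin n ⊕ Fin n) →₀ ℕ) (Sum.inl i') from rfl]
    rw [Finsupp.tsub_apply]
    simp [Finsupp.single_apply]
  rw [hm]
  rw [show (Finsupp.equivFunOnFinite.symm (fun i' => d (Sum.inl i'))) i = d (Sum.inl i) from rfl]
  rw [MvPolynomial.smul_monomial]
  congr 1
  simp

lemma Dop_mul_poly (j : Fin n) (p t : Vn n) :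
    Dop n A j (p * t) = (∑ i, A j i • pderiv i p) * t + p * Dop n A j t := by
  unfold Dop
  have hco : ∀ (i : Fin n) (x : Vn n), (pderiv i).toLinearMap x = pderiv i x := fun _ _ => rfl
  simp only [LinearMap.sum_apply, LinearMap.smul_apply, hco, pderiv_mul, smul_add,
    Finset.sum_add_distrib, Finset.sum_mul, Finset.mul_sum, smul_mul_assoc, mul_smul_comm]

lemma Dop_Dpow_apply (j : Fin n) (δ : Fin n → ℕ) (s : Vn n) :
    Dop n A j (Dpow n A δ s) = Dpow n A δ (Dop n A j s) := by
  have h := (commute_Dop_Dpow A j δ).eq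
  calc Dop n A j (Dpow n A δ s) = (Dop n A j * Dpow n A δ) s := rfl
    _ = (Dpow n A δ * Dop n A j) s := by rw [h]
    _ = _ := rfl

lemma bfAct_comm_Dop (j : Fin n) (w : Wn n) (s : Vn n) :
    Dop n A j (bfAct n A κ w s)
      = bfAct n A κ w (Dop n A j s)
        + ∑ i, A j i • bfAct n A κ (pderiv (Sum.inl i) w) s := by
  induction w using Wn_add_induction with
  | h0 => simp [bfAct_zero]
  | hadd a b ha hb =>
      rw [bfAct_add, map_add, ha, hb, bfAct_add]
      simp only [map_add, bfAct_add, smul_add, Finset.sum_add_distrib]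
      abel
  | hmono d l c =>
      have hterm : ∀ i : Fin n,
          bfAct n A κ (pderiv (Sum.inl i) (monomial d (Polynomial.monomial l c))) s
          = ((d (Sum.inl i) : ℂ) * c * κ ^ (l + ∑ j', d (Sum.inr j'))) •
              ((∏ i', (X i' : Vn n) ^
                  ((d - Finsupp.single (Sum.inl i) 1 : (Fin n ⊕ Fin n) →₀ ℕ) (Sum.inl i'))) *
                Dpow n A (fun j' => d (Sum.inr j')) s) := by
        intro i
        rw [pderiv_monomial, mul_comm (Polynomial.monomial l c) _, ← Polynomial.C_eq_natCast,
          Polynomial.C_mul_monomial, bfAct_monomial, Polynomial.sum_monomial_index _ _ (by simp)]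
        have hinr : ∀ j', ((d - Finsupp.single (Sum.inl i) 1 : (Fin n ⊕ Fin n) →₀ ℕ)) (Sum.inr j')
            = d (Sum.inr j') := by
          intro j'
          rw [Finsupp.tsub_apply]
          simp [Finsupp.single_apply]
        have hsum : (∑ j', ((d - Finsupp.single (Sum.inl i) 1 : (Fin n ⊕ Fin n) →₀ ℕ)) (Sum.inr j'))
            = ∑ j', d (Sum.inr j') := Finset.sum_congr rfl fun j' _ => hinr j'
        have hfun : (fun j' => ((d - Finsupp.single (Sum.inl i) 1 : (Fin n ⊕ Fin n) →₀ ℕ)) (Sum.inr j'))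
            = fun j' => d (Sum.inr j') := funext hinr
        rw [hsum, hfun]
      rw [bfAct_monomial, Polynomial.sum_monomial_index _ _ (by simp), map_smul, Dop_mul_poly,
        Dop_Dpow_apply, bfAct_monomial, Polynomial.sum_monomial_index _ _ (by simp)]
      rw [Finset.sum_congr rfl fun i (_ : i ∈ Finset.univ) => congrArg (A j i • ·) (hterm i)]
      rw [smul_add, add_comm]
      congr 1
      rw [Finset.sum_mul, Finset.smul_sum]
      refine Finset.sum_congr rfl fun i _ => ?_
      rw [pderiv_uprod]
      simp only [smul_mul_assoc, smul_smul]
      congr 1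
      ring


end Aux

/-- the level-`κ` fibrewise Bargmann–Fock action is compatible with the
star product with separation of variables: `(a ⋆ b) ⊛_κ s = a ⊛_κ (b ⊛_κ s)`. -/
theorem stmt1 (n : ℕ) (A : Fin n → Fin n → ℂ) (κ : ℂ) (a b : Wn n) (s : Vn n) :
    bfAct n A κ (starSV n A a b) s = bfAct n A κ a (bfAct n A κ b s) := by
  induction a using MvPolynomial.induction_on generalizing b s with
  | C p =>
      rw [starSV_C, bfAct_C_mul, show (MvPolynomial.C p : Wn n) = MvPolynomial.C p * 1 from
        (mul_one _).symm, bfAct_C_mul]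
      simp only [bfAct_one]
  | add p q hp hq =>
      rw [starSV_add_left, bfAct_add, hp, hq, bfAct_add]
  | mul_X p v ih =>
      cases v with
      | inl i =>
          rw [starSV_mul_X_inl, bfAct_X_inl_mul, ih, mul_comm p (X (Sum.inl i)), bfAct_X_inl_mul]
      | inr j =>
          have h1 : bfAct n A κ (starSV n A (p * X (Sum.inr j)) b) s
              = κ • bfAct n A κ p (bfAct n A κ b (Dop n A j s))
                + κ • ∑ i, A j i • bfAct n A κ p (bfAct n A κ (pderiv (Sum.inl i) b) s) := by
            rw [starSV_mul_X_inr, bfAct_add, bfAct_X_inr_mul, ih, bfAct_hbar_mul, bfAct_sum]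
            congr 1
            congr 1
            refine Finset.sum_congr rfl fun i _ => ?_
            rw [bfAct_C_C_mul, ih]
          have h2 : bfAct n A κ (p * X (Sum.inr j)) (bfAct n A κ b s)
              = κ • bfAct n A κ p (bfAct n A κ b (Dop n A j s))
                + κ • ∑ i, A j i • bfAct n A κ p (bfAct n A κ (pderiv (Sum.inl i) b) s) := by
            rw [mul_comm p (X (Sum.inr j)), bfAct_X_inr_mul, bfAct_comm_Dop, bfAct_s_add,
              bfAct_s_sum, smul_add]
            congr 2
            refine Finset.sum_congr rfl fun i _ => ?_
            rw [bfAct_s_smul]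
          rw [h1, h2]

end
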